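/- Suppose the linear system ξ̇(t,P) = Σ_{i=0}^{l} Aᵢ(P) ξ(t−τᵢ,P) + Σ_{j=0}^{r} Bⱼ(P) ν(t−νⱼ), ξ ≡ 0 on [−τ_m, 0], output η = Cξ, is globally identifiable at P: there exists an input ν̄ ∈ L²(0,T;ℝᵏ), ν̄ ≠ 0, such that for every P̃ ≠ P in 𝒰_P, ‖η(·,P) − η(·,P̃)‖_{L²(0,T)} > 0. Assume further: (a) for each P̃ ∈ 𝒰_P and each ε > 0, the nonlinear system (5) with input ū + (ε/‖ν̄‖)ν̄ has a solution whose deviation from the linearized solution satisfies ‖x_δ(·,P̃) − ξ(·,P̃)‖_{L²} ≤ L₈ ε² with L₈ independent of ε and P̃; and (b) the equilibrium outputs satisfy y_e(P) = y_e(P̃). Then for ε > 0 sufficiently small, the nonlinear outputs satisfy y(·,P) ≠ y(·,P̃) in L²(0,T;ℝᵐ), where the outputs are y = Cx. -/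
import Mathlib

open MeasureTheory

/-- core implication of Proposition 3.1 (Grewal–Glover extended
to delay systems).  If the linearized system is identifiable at `P` via an
input `ν̄`, the linearized output scales linearly with the input size, the
deviation between the nonlinear and linearized states is quadratic in `ε`
(uniformly in the parameter), and the equilibrium outputs coincide, then for
`ε` small enough the nonlinear outputs at `P` and `P̃` are distinct in `L²`. -/
theorem nonlinear_identifiable_of_linearized_identifiable
    (n m : ℕ) (T : ℝ) (hT : 0 < T)
    (Param : Type) (U : Set Param) (P : Param) (hP : P ∈ U)
    -- operator `C` (output map) and its induced map on `L²(0,T)`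
    (C : EuclideanSpace ℝ (Fin n) →L[ℝ] EuclideanSpace ℝ (Fin m))
    -- norm of the identifying input `ν̄` of the linearized system
    (νnorm : ℝ) (hνnorm : 0 < νnorm)
    -- outputs `η̄(·,P')` of the linearized system under the input `ν̄`
    (ηbar : Param → Lp (EuclideanSpace ℝ (Fin m)) 2
      (volume.restrict (Set.Ioc (0 : ℝ) T)))
    -- identifiability of the linearized system at `P` under `ν̄`
    (hid : ∀ P' ∈ U, P' ≠ P → 0 < ‖ηbar P - ηbar P'‖)
    -- states: `xδ ε P'` is the deviation of the nonlinear state from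
    -- equilibrium and `ξ ε P'` the linearized state, both for the input
    -- `ū + (ε/‖ν̄‖)ν̄`
    (xδ ξ : ℝ → Param → Lp (EuclideanSpace ℝ (Fin n)) 2
      (volume.restrict (Set.Ioc (0 : ℝ) T)))
    -- linear scaling of the linearized output
    (hscale : ∀ ε : ℝ, 0 < ε → ∀ P' ∈ U,
      C.compLp (ξ ε P') = (ε / νnorm) • ηbar P')
    -- (a) quadratic deviation bound, uniform in `ε` and `P'`
    (ha : ∃ L8 : ℝ, 0 ≤ L8 ∧ ∀ ε : ℝ, 0 < ε → ∀ P' ∈ U,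
      ‖xδ ε P' - ξ ε P'‖ ≤ L8 * ε ^ 2)
    -- equilibrium outputs `y_e(P')` and the nonlinear outputs `y ε P'`
    (ye : Param → Lp (EuclideanSpace ℝ (Fin m)) 2
      (volume.restrict (Set.Ioc (0 : ℝ) T)))
    (y : ℝ → Param → Lp (EuclideanSpace ℝ (Fin m)) 2
      (volume.restrict (Set.Ioc (0 : ℝ) T)))
    (hy : ∀ ε : ℝ, 0 < ε → ∀ P' ∈ U,
      y ε P' = ye P' + C.compLp (xδ ε P'))
    (Ptil : Param) (hPtil : Ptil ∈ U) (hne : Ptil ≠ P)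
    -- (b) equal equilibrium outputs
    (hb : ye P = ye Ptil) :
    ∃ ε₀ : ℝ, 0 < ε₀ ∧ ∀ ε : ℝ, 0 < ε → ε < ε₀ → y ε P ≠ y ε Ptil := by
  obtain ⟨L8, hL8, hdev⟩ := ha
  have hKnum : 0 < ‖ηbar P - ηbar Ptil‖ := hid Ptil hPtil hne
  set K : ℝ := ‖ηbar P - ηbar Ptil‖ / νnorm with hKdef
  have hK : 0 < K := div_pos hKnum hνnorm
  have hden : 0 < 2 * (‖C‖ * L8) + 1 := by positivity
  refine ⟨K / (2 * (‖C‖ * L8) + 1), div_pos hK hden, ?_⟩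
  intro ε hε hεlt heq
  -- from equality of outputs, the composed deviations agree
  have h1 : C.compLp (xδ ε P) = C.compLp (xδ ε Ptil) := by
    have := (hy ε hε P hP).symm.trans (heq.trans (hy ε hε Ptil hPtil))
    rw [hb] at this
    exact add_left_cancel this
  -- rewrite the scaled linearized output difference
  have hsub : ∀ f g, C.compLp (f - g) = C.compLp f - C.compLp g := fun f g =>
    map_sub (C.compLpₗ 2 (volume.restrict (Set.Ioc (0:ℝ) T))) f g
  have key : (ε / νnorm) • (ηbar P - ηbar Ptil)
      = C.compLp (ξ ε P - xδ ε P) + C.compLp (xδ ε Ptil - ξ ε Ptil) := by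
    rw [hsub, hsub, smul_sub, ← hscale ε hε P hP, ← hscale ε hε Ptil hPtil, h1]
    abel
  -- norm estimates
  have hb1 : ‖C.compLp (ξ ε P - xδ ε P)‖ ≤ ‖C‖ * (L8 * ε ^ 2) := by
    refine (C.norm_compLp_le _).trans ?_
    have := hdev ε hε P hP
    rw [← norm_neg, neg_sub] at this
    exact mul_le_mul_of_nonneg_left this (norm_nonneg C)
  have hb2 : ‖C.compLp (xδ ε Ptil - ξ ε Ptil)‖ ≤ ‖C‖ * (L8 * ε ^ 2) :=
    (C.norm_compLp_le _).trans
      (mul_le_mul_of_nonneg_left (hdev ε hε Ptil hPtil) (norm_nonneg C))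
  have hnormkey : ‖(ε / νnorm) • (ηbar P - ηbar Ptil)‖ = ε * K := by
    rw [norm_smul, Real.norm_eq_abs, abs_of_pos (div_pos hε hνnorm), hKdef]
    field_simp
  have hle : ε * K ≤ 2 * (‖C‖ * (L8 * ε ^ 2)) := by
    rw [← hnormkey, key]
    calc ‖C.compLp (ξ ε P - xδ ε P) + C.compLp (xδ ε Ptil - ξ ε Ptil)‖
        ≤ ‖C.compLp (ξ ε P - xδ ε P)‖ + ‖C.compLp (xδ ε Ptil - ξ ε Ptil)‖ :=
          norm_add_le _ _
      _ ≤ 2 * (‖C‖ * (L8 * ε ^ 2)) := by linarith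
  -- contradiction with the smallness of ε
  have hεK : ε * (2 * (‖C‖ * L8) + 1) < K :=
    (lt_div_iff₀ hden).mp hεlt
  nlinarith [mul_pos hε hK, norm_nonneg C, mul_nonneg (norm_nonneg C) hL8]
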